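/- For all z, x ∈ ℝ^d and u ∈ ℝ, |g(uz, x) − g(z, ux)| ≤ |z| · |x|³ (|u| + |u|³) / ((1 + |x|²)(1 + |ux|²)), where g(z,x) = e^{i⟨z,x⟩} − 1 − i⟨z,x⟩/(1 + |x|²). -/

import Mathlib

open MeasureTheory

/-- The Lévy–Khintchine integrand `g(z,x) = e^{i⟨z,x⟩} − 1 − i⟨z,x⟩/(1+|x|²)`. -/
noncomputable def levyIntegrand (d : ℕ) (z x : EuclideanSpace ℝ (Fin d)) : ℂ :=
  Complex.exp (Complex.I * ((inner ℝ z x : ℝ) : ℂ)) - 1 -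
    Complex.I * ((inner ℝ z x : ℝ) : ℂ) / (1 + (‖x‖ : ℂ) ^ 2)

/-- `|g(uz,x) − g(z,ux)| ≤ |z| |x|³ (|u|+|u|³) / ((1+|x|²)(1+|ux|²))`. -/
theorem stmt_2 (d : ℕ) (hd : 1 ≤ d) (z x : EuclideanSpace ℝ (Fin d)) (u : ℝ) :
    ‖levyIntegrand d (u • z) x - levyIntegrand d z (u • x)‖ ≤
      ‖z‖ * (‖x‖ ^ 3 * (|u| + |u| ^ 3)) / ((1 + ‖x‖ ^ 2) * (1 + ‖u • x‖ ^ 2)) := by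
  set t : ℝ := inner ℝ z x with ht
  set a : ℝ := ‖x‖ with ha
  set b : ℝ := ‖u • x‖ with hb
  have h1 : (inner ℝ (u • z) x : ℝ) = u * t := real_inner_smul_left z x u
  have h2 : (inner ℝ z (u • x) : ℝ) = u * t := real_inner_smul_right z x u
  have hb' : b = |u| * a := by rw [hb, norm_smul, Real.norm_eq_abs]
  have hD1 : (0:ℝ) < 1 + a ^ 2 := by positivity
  have hD2 : (0:ℝ) < 1 + b ^ 2 := by positivity
  set r : ℝ := u * t * (a ^ 2 - b ^ 2) / ((1 + a ^ 2) * (1 + b ^ 2)) with hr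
  have hdiff : levyIntegrand d (u • z) x - levyIntegrand d z (u • x) =
      Complex.I * (r : ℂ) := by
    unfold levyIntegrand
    rw [h1, h2, ← ha, ← hb]
    have hD1' : (1 : ℂ) + (a : ℂ) ^ 2 ≠ 0 := by
      have h := Complex.ofReal_ne_zero.mpr hD1.ne'
      push_cast at h; exact h
    have hD2' : (1 : ℂ) + (b : ℂ) ^ 2 ≠ 0 := by
      have h := Complex.ofReal_ne_zero.mpr hD2.ne'
      push_cast at h; exact h
    rw [hr]
    push_cast
    field_simp
    ring
  rw [hdiff, norm_mul, Complex.norm_I, Complex.norm_real, Real.norm_eq_abs, one_mul]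
  have hbsq : b ^ 2 = u ^ 2 * a ^ 2 := by rw [hb', mul_pow, sq_abs]
  have habs : |r| = |u * t * (a ^ 2 - b ^ 2)| / ((1 + a ^ 2) * (1 + b ^ 2)) := by
    rw [hr, abs_div, abs_of_pos (mul_pos hD1 hD2)]
  rw [habs, div_le_div_iff₀ (by positivity) (by positivity)]
  have htz : |t| ≤ ‖z‖ * a := abs_real_inner_le_norm z x
  have h3 : |u * t * (a ^ 2 - b ^ 2)| = |u| * |t| * |a ^ 2 - b ^ 2| := by
    rw [abs_mul, abs_mul]
  have h4 : |a ^ 2 - b ^ 2| ≤ a ^ 2 * (1 + u ^ 2) := by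
    rw [hbsq, abs_le]
    constructor <;> nlinarith [sq_nonneg a, sq_nonneg u, sq_nonneg (a*u)]
  have h5 : |u| ^ 2 = u ^ 2 := sq_abs u
  have hza : (0:ℝ) ≤ ‖z‖ := norm_nonneg z
  have ha0 : (0:ℝ) ≤ a := norm_nonneg x
  have hu0 : (0:ℝ) ≤ |u| := abs_nonneg u
  have ht0 : (0:ℝ) ≤ |t| := abs_nonneg t
  have key : |u * t * (a ^ 2 - b ^ 2)| ≤ ‖z‖ * (a ^ 3 * (|u| + |u| ^ 3)) := by
    rw [h3]
    calc |u| * |t| * |a ^ 2 - b ^ 2| ≤ |u| * (‖z‖ * a) * (a ^ 2 * (1 + u ^ 2)) := by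
          apply mul_le_mul (mul_le_mul_of_nonneg_left htz hu0) h4 (abs_nonneg _) (by positivity)
      _ = ‖z‖ * (a ^ 3 * (|u| + |u| ^ 3)) := by rw [← h5]; ring
  calc |u * t * (a ^ 2 - b ^ 2)| * ((1 + a ^ 2) * (1 + b ^ 2))
      ≤ ‖z‖ * (a ^ 3 * (|u| + |u| ^ 3)) * ((1 + a ^ 2) * (1 + b ^ 2)) := by
        apply mul_le_mul_of_nonneg_right key (by positivity)
    _ = ‖z‖ * (a ^ 3 * (|u| + |u| ^ 3)) * ((1 + a ^ 2) * (1 + b ^ 2)) := rfl
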